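/- Let ℓ ≥ 1 and a_1 ≥ a_2 ≥ … ≥ a_ℓ > 0, and use in every reduced election with t nominees the scoring vector (a_1, …, a_ℓ, 0, …, 0) of length t. Let φ be a (2,2)-E3-SAT formula with clauses C_1, …, C_m (m ≥ 2) over variables x_1, …, x_n. Construct the election with parties P = {p}, P_w = {w}, X_i = {x_i, x̄_i} for each i ∈ [n], and 4(ℓ−1) further singleton parties whose members are grouped into four sets D_1, D_2, D_3, D_4 of size ℓ−1 each; and with 6m+3 voters: one voter with order D_1 ≻ w ≻ [rest]; 2m+1 voters with order w ≻ D_2 ≻ [rest]; 2m+1 voters with order p ≻ D_3 ≻ [rest]; and for each j ∈ [m] two voters with order y_j^1 ≻ y_j^2 ≻ y_j^3 ≻ D_4 ≻ p ≻ [rest], where each set D_h stands for its elements in some fixed order and [rest] denotes all remaining candidates in an arbitrary order. Then, for every choice of these arbitrary orders, p is a necessary president in this election if and only if φ is unsatisfiable. -/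

import Mathlib

open scoped Classical

noncomputable section

/-- Candidates: the distinguished candidate `p`, the candidate `w`, a candidate for
each literal `x_i` / `x̄_i`, and four groups of `ℓ−1` dummies each. -/
inductive SCand (n ℓ : ℕ) where
  | pp : SCand n ℓ
  | ww : SCand n ℓ
  | lit : Fin n → Bool → SCand n ℓ
  | dum : Fin 4 → Fin (ℓ - 1) → SCand n ℓ
  deriving DecidableEq, Fintype

/-- Voters: the voter `w`, `2m+1` voters of kind `v0`, `2m+1` voters of kind `v0'`,
and two voters `u_j`, `u'_j` for every clause `j`; `6m+3` voters in total. -/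
inductive SVoter (m : ℕ) where
  | w0 : SVoter m
  | v0 : Fin (2 * m + 1) → SVoter m
  | v0' : Fin (2 * m + 1) → SVoter m
  | u : Fin m → Bool → SVoter m
  deriving DecidableEq, Fintype

variable {n m ℓ : ℕ}

/-- For each voter, the index of the block of candidates a candidate belongs to in
that voter's preference order (blocks are linearly ordered; the order inside a block
is arbitrary).  `cl j k` is the `k`-th literal of clause `j`. -/
def sgrp (cl : Fin m → Fin 3 → Fin n × Bool) : SVoter m → SCand n ℓ → ℕ
  | .w0, .dum h _ => if h = 0 then 0 else 2
  | .w0, .ww => 1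
  | .w0, _ => 2
  | .v0 _, .ww => 0
  | .v0 _, .dum h _ => if h = 1 then 1 else 2
  | .v0 _, _ => 2
  | .v0' _, .pp => 0
  | .v0' _, .dum h _ => if h = 2 then 1 else 2
  | .v0' _, _ => 2
  | .u j _, .lit x b =>
      if cl j 0 = (x, b) then 0
      else if cl j 1 = (x, b) then 1
      else if cl j 2 = (x, b) then 2
      else 5
  | .u _ _, .dum h _ => if h = 3 then 3 else 5
  | .u _ _, .pp => 4
  | .u _ _, .ww => 5

/-- Each candidate is sent to the index of its party. -/
def srep : SCand n ℓ → Unit ⊕ Unit ⊕ Fin n ⊕ (Fin 4 × Fin (ℓ - 1))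
  | .pp => Sum.inl ()
  | .ww => Sum.inr (Sum.inl ())
  | .lit x _ => Sum.inr (Sum.inr (Sum.inl x))
  | .dum h d => Sum.inr (Sum.inr (Sum.inr (h, d)))

/-- The parties: `{p}`, `{w}`, `X_i = {x_i, x̄_i}`, and singleton dummy parties. -/
def sparties (n ℓ : ℕ) : Finset (Finset (SCand n ℓ)) :=
  Finset.univ.image fun c => Finset.univ.filter fun c' => srep c' = srep c

/-- Score of `c` over the nominee set `C'` for the scoring vector
`(a 0, a 1, …)`, where `a k` is the number of points a voter gives to a candidate
preceded by exactly `k` nominees in her preference order. -/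
def posScore {C V : Type*} [Fintype V] (a : ℕ → ℤ) (pref : V → C → C → Prop)
    (C' : Finset C) (c : C) : ℤ :=
  ∑ v : V, a ((C'.filter fun c' => pref v c' c).card)

/-- `C'` contains exactly one nominee of each party of `Ps`. -/
def IsNomineeSet {C : Type*} (Ps : Finset (Finset C)) (C' : Finset C) : Prop :=
  ∀ Pt ∈ Ps, (C' ∩ Pt).card = 1

/-- `p` is a winner of every reduced election containing `p`. -/
def NecessaryPresident {C V : Type*} [Fintype V] (a : ℕ → ℤ)
    (pref : V → C → C → Prop) (Ps : Finset (Finset C)) (p : C) : Prop :=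
  ∀ C' : Finset C, IsNomineeSet Ps C' → p ∈ C' →
    ∀ c ∈ C', posScore a pref C' c ≤ posScore a pref C' p


/-! ### Auxiliary development -/

/-- The dummies of group `h`. -/
def Ddum (n ℓ : ℕ) (h : Fin 4) : Finset (SCand n ℓ) := Finset.univ.image (SCand.dum h)

lemma dum_injective (h : Fin 4) :
    Function.Injective (SCand.dum h : Fin (ℓ - 1) → SCand n ℓ) := by
  intro a b hab
  cases hab
  rfl

lemma mem_Ddum {h : Fin 4} {c : SCand n ℓ} : c ∈ Ddum n ℓ h ↔ ∃ d, c = SCand.dum h d := by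
  simp [Ddum, eq_comm]

lemma card_Ddum (h : Fin 4) : (Ddum n ℓ h).card = ℓ - 1 := by
  rw [Ddum, Finset.card_image_of_injective _ (dum_injective h), Finset.card_univ,
    Fintype.card_fin]

lemma party_pp :
    (Finset.univ.filter fun c' : SCand n ℓ => srep c' = srep SCand.pp) = {SCand.pp} := by
  ext c
  simp only [Finset.mem_filter, Finset.mem_univ, true_and]
  cases c <;> simp [srep]

lemma party_ww :
    (Finset.univ.filter fun c' : SCand n ℓ => srep c' = srep SCand.ww) = {SCand.ww} := by
  ext c
  simp only [Finset.mem_filter, Finset.mem_univ, true_and]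
  cases c <;> simp [srep]

lemma party_dum (h : Fin 4) (d : Fin (ℓ - 1)) :
    (Finset.univ.filter fun c' : SCand n ℓ => srep c' = srep (SCand.dum h d))
      = {SCand.dum h d} := by
  ext c
  simp only [Finset.mem_filter, Finset.mem_univ, true_and]
  cases c <;> simp [srep, Prod.ext_iff]

lemma party_lit (x : Fin n) (b : Bool) :
    (Finset.univ.filter fun c' : SCand n ℓ => srep c' = srep (SCand.lit x b))
      = {SCand.lit x true, SCand.lit x false} := by
  ext c
  simp only [Finset.mem_filter, Finset.mem_univ, true_and]
  cases c with
  | lit x' b' => cases b' <;> simp [srep]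
  | pp => simp [srep]
  | ww => simp [srep]
  | dum h d => simp [srep]

lemma mem_of_card_inter_singleton {α : Type*} {s : Finset α} {c : α}
    (h : (s ∩ {c}).card = 1) : c ∈ s := by
  obtain ⟨d, hd⟩ := Finset.card_eq_one.1 h
  have hdm : d ∈ s ∩ {c} := hd ▸ Finset.mem_singleton_self d
  rcases Finset.mem_inter.1 hdm with ⟨h1, h2⟩
  rwa [Finset.mem_singleton.1 h2] at h1

lemma pair_cases {α : Type*} {s t : Finset α} {A B : α} (hAB : A ≠ B)
    (hsub : ∀ c ∈ t, c = A ∨ c = B) (hA : A ∈ t) (hB : B ∈ t)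
    (h : (s ∩ t).card = 1) : (A ∈ s ∧ B ∉ s) ∨ (B ∈ s ∧ A ∉ s) := by
  obtain ⟨c, hc⟩ := Finset.card_eq_one.1 h
  have hcm : c ∈ s ∩ t := hc ▸ Finset.mem_singleton_self c
  rcases Finset.mem_inter.1 hcm with ⟨hcs, hct⟩
  rcases hsub c hct with rfl | rfl
  · left
    refine ⟨hcs, fun hBs => hAB ?_⟩
    have hBm : B ∈ s ∩ t := Finset.mem_inter.2 ⟨hBs, hB⟩
    rw [hc, Finset.mem_singleton] at hBm
    exact hBm.symm
  · right
    refine ⟨hcs, fun hAs => hAB ?_⟩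
    have hAm : A ∈ s ∩ t := Finset.mem_inter.2 ⟨hAs, hA⟩
    rw [hc, Finset.mem_singleton] at hAm
    exact hAm

section NomStruct

variable {C' : Finset (SCand n ℓ)}

lemma nom_pp (hC : IsNomineeSet (sparties n ℓ) C') : SCand.pp ∈ C' := by
  have := hC _ (Finset.mem_image_of_mem _ (Finset.mem_univ (SCand.pp : SCand n ℓ)))
  rw [party_pp] at this
  exact mem_of_card_inter_singleton this

lemma nom_ww (hC : IsNomineeSet (sparties n ℓ) C') : SCand.ww ∈ C' := by
  have := hC _ (Finset.mem_image_of_mem _ (Finset.mem_univ (SCand.ww : SCand n ℓ)))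
  rw [party_ww] at this
  exact mem_of_card_inter_singleton this

lemma nom_dum (hC : IsNomineeSet (sparties n ℓ) C') (h : Fin 4) (d : Fin (ℓ - 1)) :
    SCand.dum h d ∈ C' := by
  have := hC _ (Finset.mem_image_of_mem _ (Finset.mem_univ (SCand.dum h d : SCand n ℓ)))
  rw [party_dum] at this
  exact mem_of_card_inter_singleton this

lemma nom_sigma (hC : IsNomineeSet (sparties n ℓ) C') :
    ∃ σ : Fin n → Bool, ∀ x b, (SCand.lit x b ∈ C' ↔ σ x = b) := by
  refine ⟨fun x => if SCand.lit x true ∈ C' then true else false, fun x b => ?_⟩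
  have h := hC _ (Finset.mem_image_of_mem _ (Finset.mem_univ (SCand.lit x true : SCand n ℓ)))
  rw [party_lit] at h
  have hne : (SCand.lit x true : SCand n ℓ) ≠ SCand.lit x false := by simp
  rcases pair_cases hne (fun c hc => by simpa using hc) (by simp) (by simp) h with
    ⟨h1, h2⟩ | ⟨h1, h2⟩
  · cases b <;> simp [h1, h2]
  · cases b <;> simp [h1, h2]

end NomStruct

/-- The canonical nominee set determined by an assignment `σ`. -/
def Cσ (n ℓ : ℕ) (σ : Fin n → Bool) : Finset (SCand n ℓ) :=
  Finset.univ.filter fun c => match c with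
    | SCand.lit x b => σ x = b
    | _ => True

lemma mem_Cσ_pp {σ : Fin n → Bool} : SCand.pp ∈ Cσ n ℓ σ := by simp [Cσ]

lemma mem_Cσ_ww {σ : Fin n → Bool} : SCand.ww ∈ Cσ n ℓ σ := by simp [Cσ]

lemma mem_Cσ_dum {σ : Fin n → Bool} (h : Fin 4) (d : Fin (ℓ - 1)) :
    SCand.dum h d ∈ Cσ n ℓ σ := by simp [Cσ]

lemma mem_Cσ_lit {σ : Fin n → Bool} (x : Fin n) (b : Bool) :
    SCand.lit x b ∈ Cσ n ℓ σ ↔ σ x = b := by simp [Cσ]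

lemma Cσ_nominee (σ : Fin n → Bool) : IsNomineeSet (sparties n ℓ) (Cσ n ℓ σ) := by
  intro Pt hPt
  rw [sparties, Finset.mem_image] at hPt
  obtain ⟨c, -, rfl⟩ := hPt
  cases c with
  | pp =>
      rw [party_pp]
      exact Finset.card_eq_one.2 ⟨SCand.pp, by ext c; simp [mem_Cσ_pp]⟩
  | ww =>
      rw [party_ww]
      exact Finset.card_eq_one.2 ⟨SCand.ww, by ext c; simp [mem_Cσ_ww]⟩
  | dum h d =>
      rw [party_dum]
      exact Finset.card_eq_one.2 ⟨SCand.dum h d, by ext c; simp [mem_Cσ_dum h d]⟩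
  | lit x b =>
      rw [party_lit]
      refine Finset.card_eq_one.2 ⟨SCand.lit x (σ x), ?_⟩
      ext c
      simp only [Finset.mem_inter, Finset.mem_insert, Finset.mem_singleton]
      constructor
      · rintro ⟨hc, rfl | rfl⟩ <;> rw [mem_Cσ_lit] at hc <;> rw [← hc]
      · rintro rfl
        exact ⟨(mem_Cσ_lit x (σ x)).2 rfl, by cases σ x <;> simp⟩


/-! ### Counting machinery -/

/-- Number of nominees that voter `v` strictly prefers to `c`. -/
def cnt (pref : SVoter m → SCand n ℓ → SCand n ℓ → Prop) (C' : Finset (SCand n ℓ))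
    (v : SVoter m) (c : SCand n ℓ) : ℕ :=
  (C'.filter fun c' => pref v c' c).card

lemma posScore_eq_sum_cnt (a : ℕ → ℤ) (pref : SVoter m → SCand n ℓ → SCand n ℓ → Prop)
    (C' : Finset (SCand n ℓ)) (c : SCand n ℓ) :
    posScore a pref C' c = ∑ v : SVoter m, a (cnt pref C' v c) := rfl

section Counting

variable {cl : Fin m → Fin 3 → Fin n × Bool}
variable {pref : SVoter m → SCand n ℓ → SCand n ℓ → Prop}
variable {C' : Finset (SCand n ℓ)}

lemma cnt_lower (hord : ∀ v c c', sgrp cl v c < sgrp cl v c' → pref v c c')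
    {v : SVoter m} {c : SCand n ℓ} {S : Finset (SCand n ℓ)} (hS : S ⊆ C')
    (hlt : ∀ c' ∈ S, sgrp cl v c' < sgrp cl v c) :
    S.card ≤ cnt pref C' v c :=
  Finset.card_le_card fun c' hc' =>
    Finset.mem_filter.2 ⟨hS hc', hord v c' c (hlt c' hc')⟩

lemma cnt_exact (hlin : ∀ v, IsStrictTotalOrder (SCand n ℓ) (pref v))
    (hord : ∀ v c c', sgrp cl v c < sgrp cl v c' → pref v c c')
    {v : SVoter m} {c : SCand n ℓ} (hc : c ∈ C')
    (hblk : ∀ c' ∈ C', sgrp cl v c' = sgrp cl v c → c' = c) :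
    (C'.filter fun c' => pref v c' c)
      = C'.filter fun c' => sgrp cl v c' < sgrp cl v c := by
  haveI := hlin v
  ext c'
  simp only [Finset.mem_filter, and_congr_right_iff]
  intro hc'
  constructor
  · intro hp
    rcases Nat.lt_trichotomy (sgrp cl v c') (sgrp cl v c) with h | h | h
    · exact h
    · exact absurd hp (by rw [hblk c' hc' h]; exact irrefl_of (pref v) c)
    · exact absurd (trans_of (pref v) hp (hord v c c' h)) (irrefl_of (pref v) c')
  · exact hord v c' c

lemma cnt_big (hord : ∀ v c c', sgrp cl v c < sgrp cl v c' → pref v c c')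
    (hdum : ∀ h d, SCand.dum h d ∈ C')
    (v : SVoter m) (c : SCand n ℓ) (x : SCand n ℓ) (h : Fin 4)
    (hx : x ∈ C') (hxd : ∀ d : Fin (ℓ - 1), x ≠ SCand.dum h d)
    (hxlt : sgrp cl v x < sgrp cl v c)
    (hdlt : ∀ d : Fin (ℓ - 1), sgrp cl v (SCand.dum h d) < sgrp cl v c)
    (hℓ : 1 ≤ ℓ) :
    ℓ ≤ cnt pref C' v c := by
  have hsub : insert x (Ddum n ℓ h) ⊆ C' := by
    refine Finset.insert_subset hx fun c' hc' => ?_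
    obtain ⟨d, rfl⟩ := mem_Ddum.1 hc'
    exact hdum h d
  have hlt : ∀ c' ∈ insert x (Ddum n ℓ h), sgrp cl v c' < sgrp cl v c := by
    intro c' hc'
    rcases Finset.mem_insert.1 hc' with rfl | hc'
    · exact hxlt
    · obtain ⟨d, rfl⟩ := mem_Ddum.1 hc'
      exact hdlt d
  have hcard : (insert x (Ddum n ℓ h)).card = ℓ := by
    rw [Finset.card_insert_of_notMem
        (fun hx' => by obtain ⟨d, rfl⟩ := mem_Ddum.1 hx'; exact hxd d rfl),
      card_Ddum]
    omega
  calc ℓ = (insert x (Ddum n ℓ h)).card := hcard.symm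
    _ ≤ cnt pref C' v c := cnt_lower hord hsub hlt

end Counting

/-- the number of literals of clause `j` made true by `σ` -/
def Sj (σ : Fin n → Bool) (cl : Fin m → Fin 3 → Fin n × Bool) (j : Fin m) : ℕ :=
  (Finset.univ.filter fun k : Fin 3 => σ (cl j k).1 = (cl j k).2).card


/-! ### Exact counts -/

section Exact

variable {cl : Fin m → Fin 3 → Fin n × Bool}
variable {pref : SVoter m → SCand n ℓ → SCand n ℓ → Prop}
variable {C' : Finset (SCand n ℓ)}

lemma cnt_pp_v0' (hlin : ∀ v, IsStrictTotalOrder (SCand n ℓ) (pref v))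
    (hord : ∀ v c c', sgrp cl v c < sgrp cl v c' → pref v c c')
    (hpp : SCand.pp ∈ C') (i : Fin (2 * m + 1)) :
    cnt pref C' (SVoter.v0' i) SCand.pp = 0 := by
  have hblk : ∀ c' ∈ C', sgrp cl (SVoter.v0' i) c' = sgrp cl (SVoter.v0' i) (SCand.pp : SCand n ℓ) →
      c' = SCand.pp := by
    intro c' _ hg
    cases c' with
    | pp => rfl
    | ww => exact absurd (show (2 : ℕ) = 0 from hg) (by omega)
    | lit x b => exact absurd (show (2 : ℕ) = 0 from hg) (by omega)
    | dum h d =>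
        have hg' : (if h = (2 : Fin 4) then 1 else 2 : ℕ) = 0 := hg
        split_ifs at hg' <;> exact absurd hg' (by omega)
  rw [cnt, cnt_exact hlin hord hpp hblk]
  rw [Finset.filter_false_of_mem fun c' _ => ?_, Finset.card_empty]
  exact fun hlt => absurd (show sgrp cl (SVoter.v0' i) c' < 0 from hlt) (Nat.not_lt_zero _)

lemma cnt_ww_v0 (hlin : ∀ v, IsStrictTotalOrder (SCand n ℓ) (pref v))
    (hord : ∀ v c c', sgrp cl v c < sgrp cl v c' → pref v c c')
    (hww : SCand.ww ∈ C') (i : Fin (2 * m + 1)) :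
    cnt pref C' (SVoter.v0 i) SCand.ww = 0 := by
  have hblk : ∀ c' ∈ C', sgrp cl (SVoter.v0 i) c' = sgrp cl (SVoter.v0 i) (SCand.ww : SCand n ℓ) →
      c' = SCand.ww := by
    intro c' _ hg
    cases c' with
    | ww => rfl
    | pp => exact absurd (show (2 : ℕ) = 0 from hg) (by omega)
    | lit x b => exact absurd (show (2 : ℕ) = 0 from hg) (by omega)
    | dum h d =>
        have hg' : (if h = (1 : Fin 4) then 1 else 2 : ℕ) = 0 := hg
        split_ifs at hg' <;> exact absurd hg' (by omega)
  rw [cnt, cnt_exact hlin hord hww hblk]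
  rw [Finset.filter_false_of_mem fun c' _ => ?_, Finset.card_empty]
  exact fun hlt => absurd (show sgrp cl (SVoter.v0 i) c' < 0 from hlt) (Nat.not_lt_zero _)

lemma cnt_ww_w0 (hlin : ∀ v, IsStrictTotalOrder (SCand n ℓ) (pref v))
    (hord : ∀ v c c', sgrp cl v c < sgrp cl v c' → pref v c c')
    (hww : SCand.ww ∈ C') (hdum : ∀ h d, SCand.dum h d ∈ C') :
    cnt pref C' SVoter.w0 SCand.ww = ℓ - 1 := by
  have hblk : ∀ c' ∈ C', sgrp cl SVoter.w0 c' = sgrp cl SVoter.w0 (SCand.ww : SCand n ℓ) →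
      c' = SCand.ww := by
    intro c' _ hg
    cases c' with
    | ww => rfl
    | pp => exact absurd (show (2 : ℕ) = 1 from hg) (by omega)
    | lit x b => exact absurd (show (2 : ℕ) = 1 from hg) (by omega)
    | dum h d =>
        have hg' : (if h = (0 : Fin 4) then 0 else 2 : ℕ) = 1 := hg
        split_ifs at hg' <;> exact absurd hg' (by omega)
  rw [cnt, cnt_exact hlin hord hww hblk]
  have hset : (C'.filter fun c' => sgrp cl SVoter.w0 c' < sgrp cl SVoter.w0 (SCand.ww : SCand n ℓ))
      = Ddum n ℓ 0 := by
    ext c'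
    simp only [Finset.mem_filter, mem_Ddum]
    constructor
    · rintro ⟨hm, hg⟩
      cases c' with
      | pp => exact absurd (show (2 : ℕ) < 1 from hg) (by omega)
      | ww => exact absurd (show (1 : ℕ) < 1 from hg) (by omega)
      | lit x b => exact absurd (show (2 : ℕ) < 1 from hg) (by omega)
      | dum h d =>
          have hg' : (if h = (0 : Fin 4) then 0 else 2 : ℕ) < 1 := hg
          split_ifs at hg' with h0
          · exact ⟨d, by rw [h0]⟩
          · omega
    · rintro ⟨d, rfl⟩
      exact ⟨hdum 0 d, (by decide : (if (0 : Fin 4) = 0 then 0 else 2 : ℕ) < 1)⟩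
  rw [hset, card_Ddum]

lemma cnt_pp_u (hlin : ∀ v, IsStrictTotalOrder (SCand n ℓ) (pref v))
    (hord : ∀ v c c', sgrp cl v c < sgrp cl v c' → pref v c c')
    (hdist : ∀ j : Fin m, Function.Injective (cl j))
    (σ : Fin n → Bool) (hpp : SCand.pp ∈ C')
    (hdum : ∀ h d, SCand.dum h d ∈ C')
    (hlit : ∀ x b, SCand.lit x b ∈ C' ↔ σ x = b)
    (j : Fin m) (b : Bool) :
    cnt pref C' (SVoter.u j b) SCand.pp = Sj σ cl j + (ℓ - 1) := by
  have hblk : ∀ c' ∈ C', sgrp cl (SVoter.u j b) c' = sgrp cl (SVoter.u j b) (SCand.pp : SCand n ℓ) →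
      c' = SCand.pp := by
    intro c' _ hg
    cases c' with
    | pp => rfl
    | ww => exact absurd (show (5 : ℕ) = 4 from hg) (by omega)
    | dum h d =>
        have hg' : (if h = (3 : Fin 4) then 3 else 5 : ℕ) = 4 := hg
        split_ifs at hg' <;> exact absurd hg' (by omega)
    | lit x bb =>
        have hg' : (if cl j 0 = (x, bb) then 0 else if cl j 1 = (x, bb) then 1
            else if cl j 2 = (x, bb) then 2 else 5 : ℕ) = 4 := hg
        split_ifs at hg' <;> exact absurd hg' (by omega)
  rw [cnt, cnt_exact hlin hord hpp hblk]
  have hset : (C'.filter fun c' => sgrp cl (SVoter.u j b) c' < sgrp cl (SVoter.u j b) (SCand.pp : SCand n ℓ))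
      = ((Finset.univ.filter fun k : Fin 3 => σ (cl j k).1 = (cl j k).2).image
          fun k => SCand.lit (cl j k).1 (cl j k).2) ∪ Ddum n ℓ 3 := by
    ext c'
    simp only [Finset.mem_filter, Finset.mem_union, Finset.mem_image, mem_Ddum]
    constructor
    · rintro ⟨hm, hg⟩
      cases c' with
      | pp => exact absurd (show (4 : ℕ) < 4 from hg) (by omega)
      | ww => exact absurd (show (5 : ℕ) < 4 from hg) (by omega)
      | dum h d =>
          have hg' : (if h = (3 : Fin 4) then 3 else 5 : ℕ) < 4 := hg
          split_ifs at hg' with h3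
          · exact Or.inr ⟨d, by rw [h3]⟩
          · omega
      | lit x bb =>
          refine Or.inl ?_
          have hg' : (if cl j 0 = (x, bb) then 0 else if cl j 1 = (x, bb) then 1
              else if cl j 2 = (x, bb) then 2 else 5 : ℕ) < 4 := hg
          have hk : ∃ k : Fin 3, cl j k = (x, bb) := by
            by_contra hno
            push_neg at hno
            rw [if_neg (hno 0), if_neg (hno 1), if_neg (hno 2)] at hg'
            omega
          obtain ⟨k, hk⟩ := hk
          refine ⟨k, ⟨Finset.mem_univ _, ?_⟩, ?_⟩
          · rw [hk]
            exact (hlit x bb).1 hm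
          · rw [hk]
    · rintro (⟨k, hkmem, rfl⟩ | ⟨d, rfl⟩)
      · refine ⟨(hlit _ _).2 hkmem.2, ?_⟩
        have hval : sgrp cl (SVoter.u j b) (SCand.lit (cl j k).1 (cl j k).2 : SCand n ℓ)
            = if cl j 0 = cl j k then 0 else if cl j 1 = cl j k then 1
              else if cl j 2 = cl j k then 2 else 5 := rfl
        show sgrp cl (SVoter.u j b) (SCand.lit (cl j k).1 (cl j k).2 : SCand n ℓ) < 4
        rw [hval]
        have hk3 : ∀ k : Fin 3, k = 0 ∨ k = 1 ∨ k = 2 := by decide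
        rcases hk3 k with rfl | rfl | rfl
        · rw [if_pos rfl]; omega
        · rw [if_neg fun h => absurd (hdist j h) (by decide), if_pos rfl]; omega
        · rw [if_neg fun h => absurd (hdist j h) (by decide),
            if_neg fun h => absurd (hdist j h) (by decide), if_pos rfl]; omega
      · refine ⟨hdum 3 d, ?_⟩
        exact (by decide : (if (3 : Fin 4) = 3 then 3 else 5 : ℕ) < 4)
  rw [hset]
  have hdisj : Disjoint
      ((Finset.univ.filter fun k : Fin 3 => σ (cl j k).1 = (cl j k).2).image
        fun k => SCand.lit (cl j k).1 (cl j k).2) (Ddum n ℓ 3) := by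
    rw [Finset.disjoint_left]
    intro c hc1 hc2
    obtain ⟨k, -, rfl⟩ := Finset.mem_image.1 hc1
    obtain ⟨d, hd⟩ := mem_Ddum.1 hc2
    exact absurd hd (by simp)
  rw [Finset.card_union_of_disjoint hdisj, card_Ddum,
    Finset.card_image_of_injOn fun k1 _ k2 _ heq => ?_, Sj]
  simp only [SCand.lit.injEq] at heq
  exact hdist j (Prod.ext_iff.2 ⟨heq.1, heq.2⟩)

end Exact

/-! ### Summation over voters -/

def voterEquiv (m : ℕ) : SVoter m ≃ (Unit ⊕ Fin (2 * m + 1) ⊕ Fin (2 * m + 1) ⊕ Fin m × Bool)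
    where
  toFun v := match v with
    | .w0 => Sum.inl ()
    | .v0 i => Sum.inr (Sum.inl i)
    | .v0' i => Sum.inr (Sum.inr (Sum.inl i))
    | .u j b => Sum.inr (Sum.inr (Sum.inr (j, b)))
  invFun s := match s with
    | Sum.inl _ => .w0
    | Sum.inr (Sum.inl i) => .v0 i
    | Sum.inr (Sum.inr (Sum.inl i)) => .v0' i
    | Sum.inr (Sum.inr (Sum.inr (j, b))) => .u j b
  left_inv v := by cases v <;> rfl
  right_inv s := by rcases s with _ | (_ | (_ | ⟨j, b⟩)) <;> rfl

lemma sum_voters (f : SVoter m → ℤ) :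
    ∑ v, f v = f .w0 + (∑ i : Fin (2 * m + 1), f (.v0 i))
      + (∑ i : Fin (2 * m + 1), f (.v0' i))
      + ∑ j : Fin m, (f (.u j true) + f (.u j false)) := by
  have h := Fintype.sum_equiv (voterEquiv m) f
    (Sum.elim (fun _ => f .w0) (Sum.elim (fun i => f (.v0 i))
      (Sum.elim (fun i => f (.v0' i)) fun jb => f (.u jb.1 jb.2))))
    (by intro v; cases v <;> rfl)
  rw [h, Fintype.sum_sum_type, Fintype.sum_sum_type, Fintype.sum_sum_type,
    Fintype.sum_prod_type]
  simp only [Sum.elim_inl, Sum.elim_inr, Fintype.sum_bool, Fintype.sum_unique]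
  ring


/-! ### Score formulas -/

section ScoreFormulas

variable {cl : Fin m → Fin 3 → Fin n × Bool}
variable {pref : SVoter m → SCand n ℓ → SCand n ℓ → Prop}
variable {C' : Finset (SCand n ℓ)}

lemma score_pp_eq (hℓ : 1 ≤ ℓ) (a : ℕ → ℤ) (hzero : ∀ k, ℓ ≤ k → a k = 0)
    (hlin : ∀ v, IsStrictTotalOrder (SCand n ℓ) (pref v))
    (hord : ∀ v c c', sgrp cl v c < sgrp cl v c' → pref v c c')
    (hdist : ∀ j : Fin m, Function.Injective (cl j))
    (σ : Fin n → Bool) (hpp : SCand.pp ∈ C') (hww : SCand.ww ∈ C')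
    (hdum : ∀ h d, SCand.dum h d ∈ C')
    (hlit : ∀ x b, SCand.lit x b ∈ C' ↔ σ x = b) :
    posScore a pref C' SCand.pp
      = (2 * (m : ℤ) + 1) * a 0 + ∑ j : Fin m, 2 * a (Sj σ cl j + (ℓ - 1)) := by
  rw [posScore_eq_sum_cnt, sum_voters]
  have h1 : a (cnt pref C' SVoter.w0 SCand.pp) = 0 :=
    hzero _ (cnt_big hord hdum SVoter.w0 SCand.pp SCand.ww 0 hww (fun d => by simp)
      (by norm_num : (1:ℕ) < 2) (fun d => (by norm_num : (0:ℕ) < 2)) hℓ)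
  have h2 : ∀ i : Fin (2 * m + 1), a (cnt pref C' (SVoter.v0 i) SCand.pp) = 0 := fun i =>
    hzero _ (cnt_big hord hdum (SVoter.v0 i) SCand.pp SCand.ww 1 hww (fun d => by simp)
      (by norm_num : (0:ℕ) < 2) (fun d => (by norm_num : (1:ℕ) < 2)) hℓ)
  have h3 : ∀ i : Fin (2 * m + 1), cnt pref C' (SVoter.v0' i) SCand.pp = 0 :=
    cnt_pp_v0' hlin hord hpp
  have h4 : ∀ (j : Fin m) (b : Bool),
      cnt pref C' (SVoter.u j b) SCand.pp = Sj σ cl j + (ℓ - 1) :=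
    cnt_pp_u hlin hord hdist σ hpp hdum hlit
  simp only [h1, h2, h3, h4, Finset.sum_const_zero, Finset.sum_const, Finset.card_univ,
    Fintype.card_fin, nsmul_eq_mul, two_mul]
  push_cast
  ring

lemma score_ww_eq (hℓ : 1 ≤ ℓ) (a : ℕ → ℤ) (hzero : ∀ k, ℓ ≤ k → a k = 0)
    (hlin : ∀ v, IsStrictTotalOrder (SCand n ℓ) (pref v))
    (hord : ∀ v c c', sgrp cl v c < sgrp cl v c' → pref v c c')
    (hpp : SCand.pp ∈ C') (hww : SCand.ww ∈ C')
    (hdum : ∀ h d, SCand.dum h d ∈ C') :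
    posScore a pref C' SCand.ww = a (ℓ - 1) + (2 * (m : ℤ) + 1) * a 0 := by
  rw [posScore_eq_sum_cnt, sum_voters]
  have h1 : cnt pref C' SVoter.w0 SCand.ww = ℓ - 1 := cnt_ww_w0 hlin hord hww hdum
  have h2 : ∀ i : Fin (2 * m + 1), cnt pref C' (SVoter.v0 i) SCand.ww = 0 :=
    cnt_ww_v0 hlin hord hww
  have h3 : ∀ i : Fin (2 * m + 1), a (cnt pref C' (SVoter.v0' i) SCand.ww) = 0 := fun i =>
    hzero _ (cnt_big hord hdum (SVoter.v0' i) SCand.ww SCand.pp 2 hpp (fun d => by simp)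
      (by norm_num : (0:ℕ) < 2) (fun d => (by norm_num : (1:ℕ) < 2)) hℓ)
  have h4 : ∀ (j : Fin m) (bb : Bool), a (cnt pref C' (SVoter.u j bb) SCand.ww) = 0 :=
    fun j bb =>
    hzero _ (cnt_big hord hdum (SVoter.u j bb) SCand.ww SCand.pp 3 hpp (fun d => by simp)
      (by norm_num : (4:ℕ) < 5) (fun d => (by norm_num : (3:ℕ) < 5)) hℓ)
  simp only [h1, h2, h3, h4, Finset.sum_const_zero, Finset.sum_const, Finset.card_univ,
    Fintype.card_fin, nsmul_eq_mul, add_zero, zero_add]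
  push_cast
  ring

end ScoreFormulas

/-- for every short scoring rule `(a_1, …, a_ℓ, 0, …, 0)` with
`a_1 ≥ … ≥ a_ℓ > 0`, in the election constructed from a (2,2)-E3-SAT formula `φ`,
the candidate `p` is a necessary president iff `φ` is unsatisfiable. -/
theorem short_rule_necessary_president_iff_unsat
    (n m ℓ : ℕ) (hℓ : 1 ≤ ℓ) (hm : 2 ≤ m)
    (cl : Fin m → Fin 3 → Fin n × Bool)
    -- each clause consists of three distinct literals
    (hdist : ∀ j : Fin m, Function.Injective (cl j))
    -- each variable occurs exactly twice positively and twice negatively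
    (hocc : ∀ (x : Fin n) (b : Bool),
      ((Finset.univ : Finset (Fin m × Fin 3)).filter
        fun jk => cl jk.1 jk.2 = (x, b)).card = 2)
    -- the scoring vector: `a k` is the points for position `k+1`
    (a : ℕ → ℤ)
    (hanti : ∀ i j : ℕ, i ≤ j → j < ℓ → a j ≤ a i)
    (hpos : 0 < a (ℓ - 1))
    (hzero : ∀ k : ℕ, ℓ ≤ k → a k = 0)
    -- the preference orders, consistent with the prescribed blocks
    (pref : SVoter m → SCand n ℓ → SCand n ℓ → Prop)
    (hlin : ∀ v, IsStrictTotalOrder (SCand n ℓ) (pref v))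
    (hord : ∀ v c c', sgrp cl v c < sgrp cl v c' → pref v c c') :
    NecessaryPresident a pref (sparties n ℓ) SCand.pp ↔
      ¬ ∃ σ : Fin n → Bool, ∀ j : Fin m, ∃ k : Fin 3, σ (cl j k).1 = (cl j k).2 := by
  have ha0 : ∀ k, 0 ≤ a k := by
    intro k
    rcases lt_or_ge k ℓ with hk | hk
    · exact le_trans hpos.le (hanti k (ℓ - 1) (by omega) (by omega))
    · rw [hzero k hk]
  have hmono : ∀ i j : ℕ, i ≤ j → a j ≤ a i := by
    intro i j hij
    rcases lt_or_ge j ℓ with hj | hj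
    · exact hanti i j hij hj
    · rw [hzero j hj]; exact ha0 i
  constructor
  · -- p necessary president → unsatisfiable
    intro hnec hsat
    obtain ⟨σ, hσ⟩ := hsat
    have hsc := hnec (Cσ n ℓ σ) (Cσ_nominee σ) mem_Cσ_pp SCand.ww mem_Cσ_ww
    rw [score_pp_eq hℓ a hzero hlin hord hdist σ mem_Cσ_pp mem_Cσ_ww mem_Cσ_dum mem_Cσ_lit,
      score_ww_eq hℓ a hzero hlin hord mem_Cσ_pp mem_Cσ_ww mem_Cσ_dum] at hsc
    have hS : ∀ j : Fin m, a (Sj σ cl j + (ℓ - 1)) = 0 := by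
      intro j
      obtain ⟨k, hk⟩ := hσ j
      have hkmem : k ∈ Finset.univ.filter fun k : Fin 3 => σ (cl j k).1 = (cl j k).2 :=
        Finset.mem_filter.2 ⟨Finset.mem_univ _, hk⟩
      have h1 : 1 ≤ Sj σ cl j := Finset.card_pos.2 ⟨k, hkmem⟩
      exact hzero _ (by omega)
    simp only [hS, mul_zero, Finset.sum_const_zero, add_zero] at hsc
    linarith [hpos]
  · -- unsatisfiable → p necessary president
    intro hunsat C' hC hppC c hc
    obtain ⟨σ, hlit⟩ := nom_sigma hC
    have hww := nom_ww hC
    have hdum := nom_dum hC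
    have hpp := nom_pp hC
    have hj0 : ∃ j, Sj σ cl j = 0 := by
      by_contra hno
      push_neg at hno
      refine hunsat ⟨σ, fun j => ?_⟩
      obtain ⟨k, hk⟩ := Finset.card_pos.1 (Nat.pos_of_ne_zero (hno j))
      exact ⟨k, (Finset.mem_filter.1 hk).2⟩
    obtain ⟨j0, hj0⟩ := hj0
    have hscpp : posScore a pref C' SCand.pp
        = (2 * (m : ℤ) + 1) * a 0 + ∑ j : Fin m, 2 * a (Sj σ cl j + (ℓ - 1)) :=
      score_pp_eq hℓ a hzero hlin hord hdist σ hpp hww hdum hlit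
    have hterm : ∀ j : Fin m, (0 : ℤ) ≤ 2 * a (Sj σ cl j + (ℓ - 1)) := fun j => by
      have := ha0 (Sj σ cl j + (ℓ - 1)); linarith
    have hsum_lb : (2 : ℤ) * a (ℓ - 1) ≤ ∑ j : Fin m, 2 * a (Sj σ cl j + (ℓ - 1)) := by
      have h := Finset.single_le_sum (f := fun j : Fin m => 2 * a (Sj σ cl j + (ℓ - 1)))
        (fun j _ => hterm j) (Finset.mem_univ j0)
      simpa [hj0] using h
    have hsum_nn : (0 : ℤ) ≤ ∑ j : Fin m, 2 * a (Sj σ cl j + (ℓ - 1)) :=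
      Finset.sum_nonneg fun j _ => hterm j
    have hb : ∀ (v : SVoter m) (c0 : SCand n ℓ), a (cnt pref C' v c0) ≤ a 0 :=
      fun v c0 => hmono 0 _ (Nat.zero_le _)
    have hbn : ∀ (v : SVoter m) (c0 : SCand n ℓ), 0 ≤ a (cnt pref C' v c0) :=
      fun v c0 => ha0 _
    have zero_at : ∀ (v : SVoter m) (c0 x : SCand n ℓ) (h : Fin 4), x ∈ C' →
        (∀ d : Fin (ℓ - 1), x ≠ SCand.dum h d) → sgrp cl v x < sgrp cl v c0 →
        (∀ d : Fin (ℓ - 1), sgrp cl v (SCand.dum h d) < sgrp cl v c0) →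
        a (cnt pref C' v c0) = 0 :=
      fun v c0 x h h1 h2 h3 h4 => hzero _ (cnt_big hord hdum v c0 x h h1 h2 h3 h4 hℓ)
    have hv0_bound : ∀ c0 : SCand n ℓ,
        ∑ i : Fin (2 * m + 1), a (cnt pref C' (SVoter.v0 i) c0) ≤ (2 * (m : ℤ) + 1) * a 0 := by
      intro c0
      calc ∑ i : Fin (2 * m + 1), a (cnt pref C' (SVoter.v0 i) c0)
          ≤ ∑ _i : Fin (2 * m + 1), a 0 := Finset.sum_le_sum fun i _ => hb _ _
        _ = (2 * (m : ℤ) + 1) * a 0 := by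
            rw [Finset.sum_const, Finset.card_univ, Fintype.card_fin, nsmul_eq_mul]
            push_cast; ring
    have hv0'_bound : ∀ c0 : SCand n ℓ,
        ∑ i : Fin (2 * m + 1), a (cnt pref C' (SVoter.v0' i) c0) ≤ (2 * (m : ℤ) + 1) * a 0 := by
      intro c0
      calc ∑ i : Fin (2 * m + 1), a (cnt pref C' (SVoter.v0' i) c0)
          ≤ ∑ _i : Fin (2 * m + 1), a 0 := Finset.sum_le_sum fun i _ => hb _ _
        _ = (2 * (m : ℤ) + 1) * a 0 := by
            rw [Finset.sum_const, Finset.card_univ, Fintype.card_fin, nsmul_eq_mul]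
            push_cast; ring
    have hu_bound : ∀ c0 : SCand n ℓ,
        ∑ j : Fin m, (a (cnt pref C' (SVoter.u j true) c0)
          + a (cnt pref C' (SVoter.u j false) c0)) ≤ (m : ℤ) * (2 * a 0) := by
      intro c0
      calc ∑ j : Fin m, (a (cnt pref C' (SVoter.u j true) c0)
            + a (cnt pref C' (SVoter.u j false) c0))
          ≤ ∑ _j : Fin m, (2 * a 0 : ℤ) := by
            refine Finset.sum_le_sum fun j _ => ?_
            have := hb (SVoter.u j true) c0
            have := hb (SVoter.u j false) c0
            linarith
        _ = (m : ℤ) * (2 * a 0) := by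
            rw [Finset.sum_const, Finset.card_univ, Fintype.card_fin, nsmul_eq_mul]
    have hmnn : (0 : ℤ) ≤ 2 * (m : ℤ) * a 0 :=
      mul_nonneg (by positivity) (ha0 0)
    cases c with
    | pp => exact le_refl _
    | ww =>
        rw [score_ww_eq hℓ a hzero hlin hord hpp hww hdum, hscpp]
        have := ha0 (ℓ - 1)
        linarith
    | lit x b =>
        rw [posScore_eq_sum_cnt, sum_voters, hscpp]
        have z1 : a (cnt pref C' SVoter.w0 (SCand.lit x b)) = 0 :=
          zero_at _ _ SCand.ww 0 hww (fun d => by simp)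
            (by norm_num : (1:ℕ) < 2) (fun d => (by norm_num : (0:ℕ) < 2))
        have z2 : ∀ i, a (cnt pref C' (SVoter.v0 i) (SCand.lit x b)) = 0 := fun i =>
          zero_at _ _ SCand.ww 1 hww (fun d => by simp)
            (by norm_num : (0:ℕ) < 2) (fun d => (by norm_num : (1:ℕ) < 2))
        have z3 : ∀ i, a (cnt pref C' (SVoter.v0' i) (SCand.lit x b)) = 0 := fun i =>
          zero_at _ _ SCand.pp 2 hpp (fun d => by simp)
            (by norm_num : (0:ℕ) < 2) (fun d => (by norm_num : (1:ℕ) < 2))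
        simp only [z1, z2, z3, Finset.sum_const_zero, add_zero, zero_add]
        have := hu_bound (SCand.lit x b)
        have hrest : (m : ℤ) * (2 * a 0) + a 0 = (2 * (m : ℤ) + 1) * a 0 := by ring
        have := ha0 0
        linarith
    | dum h d =>
        rw [posScore_eq_sum_cnt, sum_voters, hscpp]
        have hfin4 : ∀ h : Fin 4, h = 0 ∨ h = 1 ∨ h = 2 ∨ h = 3 := by decide
        rcases hfin4 h with rfl | rfl | rfl | rfl
        · -- dum 0 : only the w0 voter can give points
          have z2 : ∀ i, a (cnt pref C' (SVoter.v0 i) (SCand.dum 0 d)) = 0 := fun i =>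
            zero_at _ _ SCand.ww 1 hww (fun d' => by simp)
              (by norm_num : (0:ℕ) < 2) (fun d' => (by norm_num : (1:ℕ) < 2))
          have z3 : ∀ i, a (cnt pref C' (SVoter.v0' i) (SCand.dum 0 d)) = 0 := fun i =>
            zero_at _ _ SCand.pp 2 hpp (fun d' => by simp)
              (by norm_num : (0:ℕ) < 2) (fun d' => (by norm_num : (1:ℕ) < 2))
          have z4 : ∀ (j : Fin m) (bb : Bool),
              a (cnt pref C' (SVoter.u j bb) (SCand.dum 0 d)) = 0 := fun j bb =>
            zero_at _ _ SCand.pp 3 hpp (fun d' => by simp)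
              (by norm_num : (4:ℕ) < 5) (fun d' => (by norm_num : (3:ℕ) < 5))
          simp only [z2, z3, z4, Finset.sum_const_zero, add_zero]
          have := hb SVoter.w0 (SCand.dum 0 d)
          have := ha0 0
          linarith
        · -- dum 1 : only the v0 voters can give points
          have z1 : a (cnt pref C' SVoter.w0 (SCand.dum 1 d)) = 0 :=
            zero_at _ _ SCand.ww 0 hww (fun d' => by simp)
              (by norm_num : (1:ℕ) < 2) (fun d' => (by norm_num : (0:ℕ) < 2))
          have z3 : ∀ i, a (cnt pref C' (SVoter.v0' i) (SCand.dum 1 d)) = 0 := fun i =>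
            zero_at _ _ SCand.pp 2 hpp (fun d' => by simp)
              (by norm_num : (0:ℕ) < 2) (fun d' => (by norm_num : (1:ℕ) < 2))
          have z4 : ∀ (j : Fin m) (bb : Bool),
              a (cnt pref C' (SVoter.u j bb) (SCand.dum 1 d)) = 0 := fun j bb =>
            zero_at _ _ SCand.pp 3 hpp (fun d' => by simp)
              (by norm_num : (4:ℕ) < 5) (fun d' => (by norm_num : (3:ℕ) < 5))
          simp only [z1, z3, z4, Finset.sum_const_zero, add_zero, zero_add]
          have := hv0_bound (SCand.dum 1 d)
          linarith
        · -- dum 2 : only the v0' voters can give points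
          have z1 : a (cnt pref C' SVoter.w0 (SCand.dum 2 d)) = 0 :=
            zero_at _ _ SCand.ww 0 hww (fun d' => by simp)
              (by norm_num : (1:ℕ) < 2) (fun d' => (by norm_num : (0:ℕ) < 2))
          have z2 : ∀ i, a (cnt pref C' (SVoter.v0 i) (SCand.dum 2 d)) = 0 := fun i =>
            zero_at _ _ SCand.ww 1 hww (fun d' => by simp)
              (by norm_num : (0:ℕ) < 2) (fun d' => (by norm_num : (1:ℕ) < 2))
          have z4 : ∀ (j : Fin m) (bb : Bool),
              a (cnt pref C' (SVoter.u j bb) (SCand.dum 2 d)) = 0 := fun j bb =>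
            zero_at _ _ SCand.pp 3 hpp (fun d' => by simp)
              (by norm_num : (4:ℕ) < 5) (fun d' => (by norm_num : (3:ℕ) < 5))
          simp only [z1, z2, z4, Finset.sum_const_zero, add_zero, zero_add]
          have := hv0'_bound (SCand.dum 2 d)
          linarith
        · -- dum 3 : only the u voters can give points
          have z1 : a (cnt pref C' SVoter.w0 (SCand.dum 3 d)) = 0 :=
            zero_at _ _ SCand.ww 0 hww (fun d' => by simp)
              (by norm_num : (1:ℕ) < 2) (fun d' => (by norm_num : (0:ℕ) < 2))
          have z2 : ∀ i, a (cnt pref C' (SVoter.v0 i) (SCand.dum 3 d)) = 0 := fun i =>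
            zero_at _ _ SCand.ww 1 hww (fun d' => by simp)
              (by norm_num : (0:ℕ) < 2) (fun d' => (by norm_num : (1:ℕ) < 2))
          have z3 : ∀ i, a (cnt pref C' (SVoter.v0' i) (SCand.dum 3 d)) = 0 := fun i =>
            zero_at _ _ SCand.pp 2 hpp (fun d' => by simp)
              (by norm_num : (0:ℕ) < 2) (fun d' => (by norm_num : (1:ℕ) < 2))
          simp only [z1, z2, z3, Finset.sum_const_zero, add_zero, zero_add]
          have := hu_bound (SCand.dum 3 d)
          have := ha0 0
          have hrest : (m : ℤ) * (2 * a 0) + a 0 = (2 * (m : ℤ) + 1) * a 0 := by ring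
          linarith
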